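/- Let D be a tournament on n vertices and let π arrange the vertices of D in non-increasing order of out-degree. Then for every k with 1 ≤ k ≤ n−1, the cut of π after position k has maximum size among all directed cuts E(X,Y) of D with |X| = k; consequently π is a maximum arrangement and val_D(π) = MaxDLA(D). -/

import Mathlib

open Finset

/-- Integer value of an edge under an arrangement: max {0, π(head) − π(tail)}. -/
def edgeVal {n : ℕ} (π : Equiv.Perm (Fin n)) (e : Fin n × Fin n) : ℤ :=
  max 0 ((π e.2 : ℤ) - (π e.1 : ℤ))

/-- Value of an arrangement (integer version). -/
def arrVal {n : ℕ} (E : Finset (Fin n × Fin n)) (π : Equiv.Perm (Fin n)) : ℤ :=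
  ∑ e ∈ E, edgeVal π e

/-- Value of an arrangement (natural-number version, using truncated subtraction). -/
def valN {n : ℕ} (E : Finset (Fin n × Fin n)) (π : Equiv.Perm (Fin n)) : ℕ :=
  ∑ e ∈ E, ((π e.2 : ℕ) - (π e.1 : ℕ))

/-- Size of the k-th cut of an arrangement (positions are 0-indexed, cuts 1-indexed:
`cutAt E π k` counts edges from the first k vertices to the rest). -/
def cutAt {n : ℕ} (E : Finset (Fin n × Fin n)) (π : Equiv.Perm (Fin n)) (k : ℕ) : ℕ :=
  (E.filter (fun e => (π e.1 : ℕ) < k ∧ k ≤ (π e.2 : ℕ))).card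

def outdeg {n : ℕ} (E : Finset (Fin n × Fin n)) (v : Fin n) : ℕ :=
  (E.filter (fun e => e.1 = v)).card

def indeg {n : ℕ} (E : Finset (Fin n × Fin n)) (v : Fin n) : ℕ :=
  (E.filter (fun e => e.2 = v)).card

/-- Number of edges in the directed cut from X to its complement. -/
def dicut {n : ℕ} (E : Finset (Fin n × Fin n)) (X : Finset (Fin n)) : ℕ :=
  (E.filter (fun e => e.1 ∈ X ∧ e.2 ∉ X)).card

/-- Maximum value of an arrangement of E. -/
def maxDLA {n : ℕ} (E : Finset (Fin n × Fin n)) : ℕ :=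
  (univ : Finset (Equiv.Perm (Fin n))).sup (valN E)

/- ### Auxiliary lemmas -/

lemma card_filter_lt (n k : ℕ) :
    ((univ : Finset (Fin n)).filter (fun i : Fin n => (i : ℕ) < k)).card = min k n := by
  have h1 : ((univ : Finset (Fin n)).filter (fun i : Fin n => (i : ℕ) < k)).card
      = ((range n).filter (fun m => m < k)).card := by
    refine Finset.card_bij (fun i _ => (i : ℕ)) ?_ ?_ ?_
    · intro a ha
      simp only [mem_filter, mem_univ, true_and] at ha
      simp [mem_filter, mem_range, a.isLt, ha]
    · intro a _ b _ h; exact Fin.ext h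
    · intro b hb
      simp only [mem_filter, mem_range] at hb
      exact ⟨⟨b, hb.1⟩, by simp [hb.2], rfl⟩
  have h2 : (range n).filter (fun m => m < k) = range (min k n) := by
    ext m; simp [mem_filter, mem_range]; omega
  rw [h1, h2, card_range]

/-- Rearrangement fact: for an antitone `g`, the sum of `g` over any finset `S` is at most
the sum of `g` over the first `S.card` indices. -/
lemma topk (n : ℕ) (g : Fin n → ℕ)
    (hg : ∀ i j : Fin n, (i : ℕ) ≤ (j : ℕ) → g j ≤ g i) (N : ℕ) :
    ∀ (S : Finset (Fin n)), (∑ i ∈ S, (i : ℕ)) ≤ N →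
      ∑ i ∈ S, g i ≤ ∑ i ∈ univ.filter (fun i : Fin n => (i : ℕ) < S.card), g i := by
  induction N using Nat.strong_induction_on with
  | _ N ih =>
    intro S hS
    by_cases hall : ∀ i ∈ S, (i : ℕ) < S.card
    · exact Finset.sum_le_sum_of_subset (fun i hi => mem_filter.mpr ⟨mem_univ i, hall i hi⟩)
    · push_neg at hall
      obtain ⟨m, hm, hmge⟩ := hall
      have hcardm : S.card ≤ (m : ℕ) := hmge
      have hmn : (m : ℕ) < n := m.isLt
      have hTcard : ((univ : Finset (Fin n)).filter (fun i : Fin n => (i : ℕ) < S.card)).card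
          = S.card := by rw [card_filter_lt]; omega
      have hnots : ¬ ((univ : Finset (Fin n)).filter (fun i : Fin n => (i : ℕ) < S.card)) ⊆ S := by
        intro hsub
        have heq := Finset.eq_of_subset_of_card_le hsub (le_of_eq hTcard.symm)
        have : m ∈ (univ : Finset (Fin n)).filter (fun i : Fin n => (i : ℕ) < S.card) := by
          rw [heq]; exact hm
        simp only [mem_filter] at this; omega
      obtain ⟨j, hjT, hjS⟩ := Finset.not_subset.mp hnots
      have hjlt : (j : ℕ) < S.card := (mem_filter.mp hjT).2
      have hjm : (j : ℕ) < (m : ℕ) := lt_of_lt_of_le hjlt hcardm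
      set S' := insert j (S.erase m) with hS'
      have hjE : j ∉ S.erase m := fun h => hjS (mem_of_mem_erase h)
      have hcard' : S'.card = S.card := by
        rw [hS', card_insert_of_notMem hjE, card_erase_of_mem hm]
        have : 0 < S.card := card_pos.mpr ⟨m, hm⟩
        omega
      have hsumval : (∑ i ∈ S', (i : ℕ)) < ∑ i ∈ S, (i : ℕ) := by
        rw [hS', Finset.sum_insert hjE, ← Finset.add_sum_erase S _ hm]
        omega
      have hless := ih (∑ i ∈ S', (i : ℕ)) (lt_of_lt_of_le hsumval hS) S' le_rfl
      rw [hcard'] at hless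
      refine le_trans ?_ hless
      rw [hS', Finset.sum_insert hjE, ← Finset.add_sum_erase S g hm]
      have := hg j m (le_of_lt hjm)
      omega

lemma sum_outdeg {n : ℕ} (E : Finset (Fin n × Fin n)) (X : Finset (Fin n)) :
    ∑ v ∈ X, outdeg E v = (E.filter (fun e => e.1 ∈ X)).card := by
  rw [Finset.card_eq_sum_card_fiberwise (f := Prod.fst) (s := E.filter (fun e => e.1 ∈ X)) (t := X)
    (fun e he => (mem_filter.mp he).2)]
  refine Finset.sum_congr rfl (fun v hv => ?_)
  unfold outdeg
  congr 1
  ext e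
  simp only [mem_filter]
  constructor
  · rintro ⟨he, h1⟩; exact ⟨⟨he, h1 ▸ hv⟩, h1⟩
  · rintro ⟨⟨he, _⟩, h1⟩; exact ⟨he, h1⟩

lemma split_out {n : ℕ} (E : Finset (Fin n × Fin n)) (X : Finset (Fin n)) :
    (E.filter (fun e => e.1 ∈ X)).card
      = dicut E X + (E.filter (fun e => e.1 ∈ X ∧ e.2 ∈ X)).card := by
  unfold dicut
  have h := Finset.card_filter_add_card_filter_not
    (s := E.filter (fun e => e.1 ∈ X)) (p := fun e => e.2 ∈ X)
  rw [Finset.filter_filter, Finset.filter_filter] at h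
  omega

lemma inner_card {n : ℕ} (E : Finset (Fin n × Fin n))
    (hloop : ∀ v : Fin n, (v, v) ∉ E)
    (htour : ∀ u v : Fin n, u ≠ v → ((u, v) ∈ E ↔ (v, u) ∉ E))
    (X : Finset (Fin n)) :
    2 * (E.filter (fun e => e.1 ∈ X ∧ e.2 ∈ X)).card = X.card * X.card - X.card := by
  set A := E.filter (fun e => e.1 ∈ X ∧ e.2 ∈ X) with hA
  have hmemA : ∀ e, e ∈ A ↔ e ∈ E ∧ e.1 ∈ X ∧ e.2 ∈ X := by
    intro e; simp [hA, mem_filter, and_assoc]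
  have hswapc : (A.image Prod.swap).card = A.card :=
    Finset.card_image_of_injective _ Prod.swap_injective
  have hdisj : Disjoint A (A.image Prod.swap) := by
    rw [Finset.disjoint_left]
    intro e heA heB
    obtain ⟨e', he'A, he's⟩ := Finset.mem_image.mp heB
    rw [hmemA] at heA he'A
    have hne : e.1 ≠ e.2 := by
      intro h
      exact hloop e.1 (by have := heA.1; rw [show e = (e.1, e.2) from rfl, ← h] at this; exact this)
    have : (e.2, e.1) ∈ E := by
      have : e' = (e.2, e.1) := by
        have := congrArg Prod.swap he's
        rwa [Prod.swap_swap] at this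
      rw [← this]; exact he'A.1
    exact ((htour e.1 e.2 hne).mp (by rw [show (e.1, e.2) = e from rfl]; exact heA.1)) this
  have hunion : A ∪ A.image Prod.swap = X.offDiag := by
    ext e
    simp only [Finset.mem_union, Finset.mem_offDiag, Finset.mem_image, hmemA]
    constructor
    · rintro (⟨he, h1, h2⟩ | ⟨e', ⟨he', h1, h2⟩, hs⟩)
      · refine ⟨h1, h2, fun h => hloop e.1 ?_⟩
        have : (e.1, e.1) ∈ E := by
          rw [show ((e.1, e.1) : Fin n × Fin n) = (e.1, e.2) from by rw [h]]; exact he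
        exact this
      · subst hs
        refine ⟨h2, h1, fun h => hloop e'.1 ?_⟩
        simp only [Prod.fst_swap, Prod.snd_swap] at h
        have : e' = (e'.1, e'.1) := by
          rw [show e' = (e'.1, e'.2) from rfl]; rw [h]
        rwa [this] at he'
    · rintro ⟨h1, h2, hne⟩
      by_cases he : (e.1, e.2) ∈ E
      · left; exact ⟨by rwa [show (e.1, e.2) = e from rfl] at he, h1, h2⟩
      · right
        have : (e.2, e.1) ∈ E := by
          by_contra hc
          exact he ((htour e.1 e.2 hne).mpr hc)
        exact ⟨(e.2, e.1), ⟨this, h2, h1⟩, by simp⟩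
  have hcu := Finset.card_union_of_disjoint hdisj
  rw [hunion, Finset.offDiag_card] at hcu
  omega

lemma cut_eq_dicut {n : ℕ} (E : Finset (Fin n × Fin n)) (σ : Equiv.Perm (Fin n)) (k : ℕ) :
    cutAt E σ k = dicut E (univ.filter (fun v : Fin n => (σ v : ℕ) < k)) := by
  unfold cutAt dicut
  congr 1
  ext e
  simp only [mem_filter, mem_univ, true_and, not_lt]

lemma prefix_card {n : ℕ} (σ : Equiv.Perm (Fin n)) (k : ℕ) (hk : k ≤ n) :
    (univ.filter (fun v : Fin n => (σ v : ℕ) < k)).card = k := by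
  have h : (univ.filter (fun v : Fin n => (σ v : ℕ) < k)).card
      = ((univ : Finset (Fin n)).filter (fun i : Fin n => (i : ℕ) < k)).card := by
    refine Finset.card_bij (fun v _ => σ v) ?_ ?_ ?_
    · intro a ha; simp only [mem_filter, mem_univ, true_and] at ha ⊢; exact ha
    · intro a _ b _ h; exact σ.injective h
    · intro b hb
      simp only [mem_filter, mem_univ, true_and] at hb
      exact ⟨σ.symm b, by simp [hb], by simp⟩
  rw [h, card_filter_lt]; omega

lemma valN_eq_sum_cuts {n : ℕ} (E : Finset (Fin n × Fin n)) (σ : Equiv.Perm (Fin n)) :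
    valN E σ = ∑ k ∈ Icc 1 (n - 1), cutAt E σ k := by
  unfold valN cutAt
  have h : ∀ e ∈ E, ((σ e.2 : ℕ) - (σ e.1 : ℕ))
      = ((Icc 1 (n-1)).filter (fun k => (σ e.1 : ℕ) < k ∧ k ≤ (σ e.2 : ℕ))).card := by
    intro e _
    have h2 : (σ e.2 : ℕ) < n := (σ e.2).isLt
    have h1 : (σ e.1 : ℕ) < n := (σ e.1).isLt
    have : (Icc 1 (n-1)).filter (fun k => (σ e.1 : ℕ) < k ∧ k ≤ (σ e.2 : ℕ))
        = Ioc (σ e.1 : ℕ) (σ e.2 : ℕ) := by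
      ext m; simp only [mem_filter, mem_Icc, mem_Ioc]; omega
    rw [this, Nat.card_Ioc]
  rw [Finset.sum_congr rfl h]
  simp_rw [Finset.card_filter]
  rw [Finset.sum_comm]

/-- in a tournament arranged by non-increasing out-degree, every cut of
the arrangement is a maximum directed cut for its cardinality; consequently the
arrangement is maximum and its value is MaxDLA(D). -/
theorem stmt15 (n : ℕ) (E : Finset (Fin n × Fin n))
    (hloop : ∀ v : Fin n, (v, v) ∉ E)
    (htour : ∀ u v : Fin n, u ≠ v → ((u, v) ∈ E ↔ (v, u) ∉ E))
    (π : Equiv.Perm (Fin n))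
    (hsort : ∀ u v : Fin n, (π u : ℕ) ≤ (π v : ℕ) → outdeg E v ≤ outdeg E u) :
    (∀ k ∈ Icc 1 (n - 1), ∀ X : Finset (Fin n), X.card = k → dicut E X ≤ cutAt E π k) ∧
    (∀ σ : Equiv.Perm (Fin n), valN E σ ≤ valN E π) ∧
    valN E π = maxDLA E := by
  -- the key claim, for every k ≤ n (not just k ∈ Icc 1 (n-1))
  have key : ∀ (X : Finset (Fin n)), dicut E X ≤ cutAt E π X.card := by
    intro X
    set k := X.card with hk
    have hkn : k ≤ n := by
      calc k ≤ (univ : Finset (Fin n)).card := card_le_card (subset_univ X)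
        _ = n := by simp
    set P := univ.filter (fun v : Fin n => (π v : ℕ) < k) with hP
    have hPcard : P.card = k := prefix_card π k hkn
    -- sums of out-degrees compare
    have hsum : ∑ v ∈ X, outdeg E v ≤ ∑ v ∈ P, outdeg E v := by
      set g : Fin n → ℕ := fun i => outdeg E (π.symm i) with hg
      have hganti : ∀ i j : Fin n, (i : ℕ) ≤ (j : ℕ) → g j ≤ g i := by
        intro i j hij
        refine hsort (π.symm i) (π.symm j) ?_
        simpa using hij
      have himg : ∀ (S : Finset (Fin n)), ∑ v ∈ S, outdeg E v = ∑ i ∈ S.image π, g i := by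
        intro S
        rw [Finset.sum_image (fun a _ b _ h => π.injective h)]
        refine Finset.sum_congr rfl (fun v _ => ?_)
        simp [hg]
      have hXcard : (X.image π).card = k := by
        rw [Finset.card_image_of_injective _ π.injective, hk]
      have hPimg : P.image π = univ.filter (fun i : Fin n => (i : ℕ) < k) := by
        ext i
        simp only [Finset.mem_image, mem_filter, mem_univ, true_and, hP]
        constructor
        · rintro ⟨v, hv, rfl⟩; exact hv
        · intro hi; exact ⟨π.symm i, by simpa using hi, by simp⟩
      calc ∑ v ∈ X, outdeg E v = ∑ i ∈ X.image π, g i := himg X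
        _ ≤ ∑ i ∈ univ.filter (fun i : Fin n => (i : ℕ) < (X.image π).card), g i :=
            topk n g hganti _ (X.image π) le_rfl
        _ = ∑ i ∈ P.image π, g i := by rw [hXcard, hPimg]
        _ = ∑ v ∈ P, outdeg E v := (himg P).symm
    have hX1 := sum_outdeg E X
    have hP1 := sum_outdeg E P
    have hX2 := split_out E X
    have hP2 := split_out E P
    have hX3 := inner_card E hloop htour X
    have hP3 := inner_card E hloop htour P
    rw [cut_eq_dicut, ← hP]
    rw [hPcard] at hP3
    rw [← hk] at hX3
    omega
  have part1 : ∀ k ∈ Icc 1 (n - 1), ∀ X : Finset (Fin n), X.card = k →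
      dicut E X ≤ cutAt E π k := by
    intro k _ X hX
    rw [← hX]; exact key X
  have part2 : ∀ σ : Equiv.Perm (Fin n), valN E σ ≤ valN E π := by
    intro σ
    rw [valN_eq_sum_cuts E σ, valN_eq_sum_cuts E π]
    refine Finset.sum_le_sum (fun k hk => ?_)
    have hk1 : 1 ≤ k ∧ k ≤ n - 1 := mem_Icc.mp hk
    have hkn : k ≤ n := le_trans hk1.2 (Nat.sub_le n 1)
    rw [cut_eq_dicut E σ k]
    exact part1 k hk _ (prefix_card σ k hkn)
  refine ⟨part1, part2, ?_⟩
  refine le_antisymm (Finset.le_sup (mem_univ π)) (Finset.sup_le (fun σ _ => part2 σ))
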